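/- arXiv:1403.3227 — 2 statements merged into one kernel-verified Lean document; each statement's English description precedes it below -/
import Mathlib

section
/- Let N ≥ 2 be an integer, c ∈ [0,1], and set a_n = P_n^{(N-2,0)}(2c-1)/(N+n-1)_n for n ≥ 0. Then for every real x, ∑_{n=0}^∞ (a_n/n!) · (N+2n-1)! · (-1)^n · J_{2n+N-1}(x) = (x/2)^{N-1} · ∑_{p=0}^∞ (-1)^p c^p (x/2)^{2p}/(p!)^2, where the series on the left converges absolutely. -/
/-- Pochhammer symbol `(a)_m = a (a+1) ⋯ (a+m-1)`. -/
noncomputable def poch (a : ℝ) (m : ℕ) : ℝ := ∏ i ∈ Finset.range m, (a + i)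

/-- Jacobi polynomial with nonnegative integer parameters. -/
noncomputable def jacobiP (α β n : ℕ) (x : ℝ) : ℝ :=
  ∑ m ∈ Finset.range (n + 1),
    (Nat.choose (n + α) (n - m) : ℝ) * (Nat.choose (n + β) m : ℝ) *
      ((x - 1) / 2) ^ m * ((x + 1) / 2) ^ (n - m)

/-- Bessel function of the first kind of nonnegative integer order. -/
noncomputable def besselJ (ν : ℕ) (x : ℝ) : ℝ :=
  ∑' p : ℕ, (-1 : ℝ) ^ p / ((Nat.factorial p : ℝ) * (Nat.factorial (p + ν) : ℝ)) *
    (x / 2) ^ (2 * p + ν)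


open Finset

private lemma facR_pos (n : ℕ) : (0:ℝ) < (Nat.factorial n : ℝ) := by
  exact_mod_cast n.factorial_pos
private lemma facR_ne (n : ℕ) : (Nat.factorial n : ℝ) ≠ 0 := (facR_pos n).ne'

set_option maxHeartbeats 1000000 in
private lemma tele1 (A i d : ℕ) :
    (-1:ℝ)^(i+1) * (Nat.factorial (A+(i+1))) * (A+2*(i+1)+1) /
      ((Nat.factorial (i+1)) * (Nat.factorial (d+1)) * (Nat.factorial (A+(i+1+d+1)+(i+1)+1)))
    = (-1:ℝ)^(i+1) * (Nat.factorial (A+(i+1)+1)) /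
        ((i+1+d+1 : ℕ) * (Nat.factorial (i+1)) * (Nat.factorial d) * (Nat.factorial (A+(i+1+d+1)+(i+1)+1)))
      - (-1:ℝ)^i * (Nat.factorial (A+(i+1))) /
        ((i+1+d+1 : ℕ) * (Nat.factorial i) * (Nat.factorial (d+1)) * (Nat.factorial (A+(i+1+d+1)+(i+1)))) := by
  rw [Nat.factorial_succ (A + (i+1+d+1) + (i+1)),
      Nat.factorial_succ (A+(i+1)), Nat.factorial_succ d, Nat.factorial_succ i]
  have h1 := facR_ne d
  have h2 := facR_ne i
  have h3 := facR_ne (A+(i+1))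
  have h4 := facR_ne (A + (i+1+d+1) + (i+1))
  push_cast
  have h6 : ((i:ℝ)+1+d+1) ≠ 0 := by positivity
  have h7 : ((A:ℝ)+(i+1+d+1)+(i+1)+1) ≠ 0 := by positivity
  have h8 : ((i:ℝ)+1) ≠ 0 := by positivity
  have h9 : ((d:ℝ)+1) ≠ 0 := by positivity
  field_simp
  ring

private lemma tele0 (A d : ℕ) :
    (Nat.factorial A : ℝ) * (A+1) /
      ((Nat.factorial (d+1)) * (Nat.factorial (A+(d+1)+1)))
    = (Nat.factorial (A+1) : ℝ) /
        ((d+1 : ℕ) * (Nat.factorial d) * (Nat.factorial (A+(d+1)+1))) := by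
  rw [Nat.factorial_succ A, Nat.factorial_succ d]
  have h1 := facR_ne d
  have h2 := facR_ne A
  have h3 := facR_ne (A+(d+1)+1)
  push_cast
  have h9 : ((d:ℝ)+1) ≠ 0 := by positivity
  field_simp

private lemma teleEnd (A d : ℕ) :
    (-1:ℝ)^d * (Nat.factorial (A+(d+1))) /
        ((d+1 : ℕ) * (Nat.factorial d) * (Nat.factorial 0) * (Nat.factorial (A+(d+1)+(d+1))))
      + (-1:ℝ)^(d+1) * (Nat.factorial (A+(d+1))) * (A+2*(d+1)+1) /
        ((Nat.factorial (d+1)) * (Nat.factorial 0) * (Nat.factorial (A+(d+1)+(d+1)+1))) = 0 := by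
  rw [Nat.factorial_succ (A+(d+1)+(d+1)), Nat.factorial_succ d]
  have h1 := facR_ne d
  have h2 := facR_ne (A+(d+1))
  have h3 := facR_ne (A+(d+1)+(d+1))
  push_cast
  have h9 : ((d:ℝ)+1) ≠ 0 := by positivity
  have h7 : ((A:ℝ)+(d+1)+(d+1)+1) ≠ 0 := by positivity
  field_simp
  ring

/-- telescoping core -/
private lemma coreT (A M : ℕ) (hM : 1 ≤ M) :
    ∑ j ∈ range (M+1), (-1:ℝ)^j * (Nat.factorial (A+j)) * (A+2*j+1) /
      ((Nat.factorial j) * (Nat.factorial (M-j)) * (Nat.factorial (A+M+j+1))) = 0 := by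
  obtain ⟨e, rfl⟩ : ∃ e, M = e + 1 := ⟨M - 1, by omega⟩
  set G : ℕ → ℝ := fun j => if j = 0 then 0 else
    (-1:ℝ)^(j-1) * (Nat.factorial (A+j)) /
      ((e+1 : ℕ) * (Nat.factorial (j-1)) * (Nat.factorial (e+1-j)) * (Nat.factorial (A+(e+1)+j))) with hG
  have key : ∀ j < e+1, (-1:ℝ)^j * (Nat.factorial (A+j)) * (A+2*j+1) /
      ((Nat.factorial j) * (Nat.factorial (e+1-j)) * (Nat.factorial (A+(e+1)+j+1)))
      = G (j+1) - G j := by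
    intro j hj
    obtain ⟨d, hd⟩ : ∃ d, e = j + d := ⟨e - j, by omega⟩
    subst hd
    rcases j with _ | i
    · simp only [hG, if_pos rfl, if_neg Nat.one_ne_zero]
      simp only [Nat.zero_add, Nat.add_zero, pow_zero, one_mul, sub_zero,
        Nat.factorial_zero, Nat.cast_one]
      norm_num
      exact_mod_cast tele0 A d
    · simp only [hG, if_neg (Nat.succ_ne_zero i), if_neg (Nat.succ_ne_zero (i+1))]
      rw [show i+1+1-1 = i+1 from by omega, show i+1-1 = i from by omega,
          show i+1+d+1-(i+1+1) = d from by omega,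
          show i+1+d+1-(i+1) = d+1 from by omega,
          show A+(i+1+d+1)+(i+1+1) = A+(i+1+d+1)+(i+1)+1 from by omega]
      exact_mod_cast tele1 A i d
  rw [Finset.sum_range_succ, Finset.sum_congr rfl (fun j hj => key j (mem_range.mp hj)),
      Finset.sum_range_sub G]
  simp only [hG, if_pos rfl, if_neg (Nat.succ_ne_zero e)]
  rw [show e+1-1 = e from by omega, show e+1-(e+1) = 0 from by omega, sub_zero]
  exact_mod_cast teleEnd A e

set_option maxHeartbeats 1000000 in
private lemma F2 (α q k : ℕ) (hk : k ≤ q) :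
    ∑ n ∈ range (q+1), (-1:ℝ)^(n-k) * (n.choose k : ℝ) * ((n+α+k).choose k : ℝ) *
      ((Nat.factorial (α+n)) * (2*(n:ℝ)+α+1) /
        ((Nat.factorial n) * (Nat.factorial (q-n)) * (Nat.factorial (q+n+α+1))))
    = if k = q then 1/(Nat.factorial q : ℝ)^2 else 0 := by
  rw [← Finset.sum_subset (s₁ := Finset.Ico k (q+1))
      (by rw [Finset.range_eq_Ico]; exact Finset.Ico_subset_Ico (Nat.zero_le _) le_rfl)
      (by
        intro n hn' hn
        have h1 := Finset.mem_range.mp hn'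
        have hnk : n < k := by
          rcases Nat.lt_or_ge n k with h | h
          · exact h
          · exact absurd (Finset.mem_Ico.mpr ⟨h, h1⟩) hn
        rw [Nat.choose_eq_zero_of_lt hnk]
        simp)]
  rw [Finset.sum_Ico_eq_sum_range]
  rw [show q + 1 - k = (q-k)+1 from by omega]
  have hterm : ∀ j ∈ range ((q-k)+1),
      (-1:ℝ)^((k+j)-k) * ((k+j).choose k : ℝ) * (((k+j)+α+k).choose k : ℝ) *
        ((Nat.factorial (α+(k+j))) * (2*((k+j):ℕ)+(α:ℝ)+1) /
          ((Nat.factorial (k+j)) * (Nat.factorial (q-(k+j))) * (Nat.factorial (q+(k+j)+α+1))))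
      = (1/(Nat.factorial k : ℝ)^2) *
        ((-1:ℝ)^j * (Nat.factorial ((α+2*k)+j)) * ((α+2*k)+2*j+1) /
          ((Nat.factorial j) * (Nat.factorial ((q-k)-j)) * (Nat.factorial ((α+2*k)+(q-k)+j+1)))) := by
    intro j hj
    have hjM : j ≤ q - k := by simpa using Nat.lt_succ_iff.mp (mem_range.mp hj)
    rw [show (k+j)-k = j from by omega,
        Nat.cast_add_choose,
        Nat.cast_choose ℝ (show k ≤ (k+j)+α+k from by omega),
        show q - (k+j) = (q-k)-j from by omega,
        show (k+j)+α+k - k = α+(k+j) from by omega,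
        show (k+j)+α+k = (α+2*k)+j from by omega,
        show q+(k+j)+α+1 = (α+2*k)+(q-k)+j+1 from by omega]
    have h1 := facR_ne j
    have h2 := facR_ne k
    have h3 := facR_ne (α+(k+j))
    have h4 := facR_ne ((q-k)-j)
    have h5 := facR_ne ((α+2*k)+(q-k)+j+1)
    have h6 := facR_ne ((α+2*k)+j)
    have h7 := facR_ne (k+j)
    push_cast
    field_simp
    ring
  rw [Finset.sum_congr rfl hterm, ← Finset.mul_sum]
  by_cases hkq : k = q
  · subst hkq
    simp only [Nat.sub_self, if_pos rfl]
    rw [Finset.sum_range_one]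
    rw [show (α+2*k)+0+0+1 = ((α+2*k))+1 from by omega, Nat.factorial_succ (α+2*k)]
    have h6 := facR_ne (α+2*k)
    have h7 : ((α:ℝ)+2*k+1) ≠ 0 := by positivity
    push_cast
    field_simp
    ring
  · have hT := coreT (α+2*k) (q-k) (by omega)
    push_cast at hT
    rw [hT, mul_zero, if_neg hkq]

/-- nat Vandermonde-type identity -/
private lemma vand (α n k : ℕ) (hk : k ≤ n) :
    ∑ m ∈ range (n+1), (n+α).choose (n-m) * (n.choose m * m.choose (n-k))
    = n.choose k * (n+α+k).choose k := by
  rw [← Finset.sum_subset (s₁ := Finset.Ico (n-k) (n+1))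
      (by rw [Finset.range_eq_Ico]; exact Finset.Ico_subset_Ico (Nat.zero_le _) le_rfl)
      (by
        intro m hm' hm
        have h1 := Finset.mem_range.mp hm'
        have hmk : m < n - k := by
          rcases Nat.lt_or_ge m (n-k) with h | h
          · exact h
          · exact absurd (Finset.mem_Ico.mpr ⟨h, h1⟩) hm
        rw [Nat.choose_eq_zero_of_lt hmk, Nat.mul_zero, Nat.mul_zero])]
  rw [Finset.sum_Ico_eq_sum_range, show n + 1 - (n-k) = k+1 from by omega]
  have hterm : ∀ s ∈ range (k+1),
      (n+α).choose (n-((n-k)+s)) * (n.choose ((n-k)+s) * ((n-k)+s).choose (n-k))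
      = n.choose k * ((n+α).choose (k-s) * k.choose s) := by
    intro s hs
    have hsk : s ≤ k := Nat.lt_succ_iff.mp (mem_range.mp hs)
    rw [Nat.choose_mul (show n-k ≤ (n-k)+s from by omega),
        show n - ((n-k)+s) = k - s from by omega,
        show n - (n-k) = k from by omega,
        show (n-k)+s - (n-k) = s from by omega,
        Nat.choose_symm hk]
    ring
  rw [Finset.sum_congr rfl hterm, ← Finset.mul_sum]
  congr 1
  rw [Nat.add_choose_eq, Finset.Nat.sum_antidiagonal_eq_sum_range_succ_mk,
      ← Finset.sum_range_reflect]
  refine Finset.sum_congr rfl (fun s hs => ?_)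
  have hsk : s ≤ k := Nat.lt_succ_iff.mp (mem_range.mp hs)
  rw [show k + 1 - 1 - s = k - s from by omega, show k - (k-s) = s from by omega]


set_option maxHeartbeats 800000 in
/-- expansion of jacobiP in powers of c -/
private lemma F1 (α n : ℕ) (c : ℝ) :
    jacobiP α 0 n (2*c-1) = ∑ k ∈ range (n+1),
      (-1:ℝ)^(n-k) * (n.choose k : ℝ) * ((n+α+k).choose k : ℝ) * c^k := by
  unfold jacobiP
  simp only [Nat.add_zero, show (2*c-1-1)/2 = c + (-1) from by ring,
    show (2*c-1+1)/2 = c from by ring]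
  have step1 : ∀ m ∈ range (n+1),
      ((n+α).choose (n-m) : ℝ) * (n.choose m : ℝ) * (c + (-1))^m * c^(n-m)
      = ∑ i ∈ range (n+1),
          ((n+α).choose (n-m) : ℝ) * (n.choose m : ℝ) * (m.choose i : ℝ) * (-1)^i * c^(n-i) := by
    intro m hm
    have hmn : m ≤ n := Nat.lt_succ_iff.mp (mem_range.mp hm)
    rw [add_pow, Finset.mul_sum, Finset.sum_mul, ← Finset.sum_range_reflect]
    simp only [Nat.add_sub_cancel]
    have e1 : ∀ i ∈ range (m+1),
        ((n+α).choose (n-m) : ℝ) * (n.choose m : ℝ) *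
            (c^(m-i) * (-1)^(m-(m-i)) * ((m.choose (m-i) : ℕ) : ℝ)) * c^(n-m)
        = ((n+α).choose (n-m) : ℝ) * (n.choose m : ℝ) * (m.choose i : ℝ) * (-1)^i * c^(n-i) := by
      intro i hi
      have him : i ≤ m := Nat.lt_succ_iff.mp (mem_range.mp hi)
      rw [show m - (m-i) = i from by omega, Nat.choose_symm him]
      calc ((n+α).choose (n-m) : ℝ) * (n.choose m : ℝ) *
            (c^(m-i) * (-1)^i * ((m.choose i : ℕ) : ℝ)) * c^(n-m)
          = ((n+α).choose (n-m) : ℝ) * (n.choose m : ℝ) * (m.choose i : ℝ) * (-1)^i *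
              (c^(m-i) * c^(n-m)) := by ring
        _ = _ := by rw [← pow_add, show (m-i)+(n-m) = n-i from by omega]
    rw [Finset.sum_congr rfl e1]
    refine Finset.sum_subset (Finset.range_subset_range.mpr (by omega)) ?_
    intro i _ hi
    have him : m < i := by
      rcases Nat.lt_or_ge m i with h | h
      · exact h
      · exact absurd (Finset.mem_range.mpr (by omega)) hi
    rw [Nat.choose_eq_zero_of_lt him]
    simp
  rw [Finset.sum_congr rfl step1, Finset.sum_comm]
  rw [← Finset.sum_range_reflect]
  refine Finset.sum_congr rfl (fun k hk => ?_)
  have hkn : k ≤ n := Nat.lt_succ_iff.mp (mem_range.mp hk)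
  simp only [Nat.add_sub_cancel]
  have e2 : ∀ m ∈ range (n+1),
      ((n+α).choose (n-m) : ℝ) * (n.choose m : ℝ) * (m.choose (n-k) : ℝ) * (-1)^(n-k) * c^(n-(n-k))
      = (((n+α).choose (n-m) * (n.choose m * m.choose (n-k)) : ℕ) : ℝ) * ((-1)^(n-k) * c^k) := by
    intro m _
    rw [show n-(n-k) = k from by omega]
    push_cast
    ring
  rw [Finset.sum_congr rfl e2, ← Finset.sum_mul, ← Nat.cast_sum, vand α n k hkn]
  push_cast
  ring

private lemma KEY (α q : ℕ) (c : ℝ) :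
    ∑ n ∈ range (q+1), jacobiP α 0 n (2*c-1) *
      ((Nat.factorial (α+n)) * (2*(n:ℝ)+α+1) /
        ((Nat.factorial n) * (Nat.factorial (q-n)) * (Nat.factorial (q+n+α+1))))
    = c^q / (Nat.factorial q : ℝ)^2 := by
  have step1 : ∀ n ∈ range (q+1), jacobiP α 0 n (2*c-1) *
      ((Nat.factorial (α+n)) * (2*(n:ℝ)+α+1) /
        ((Nat.factorial n) * (Nat.factorial (q-n)) * (Nat.factorial (q+n+α+1))))
      = ∑ k ∈ range (q+1),
          ((-1:ℝ)^(n-k) * (n.choose k : ℝ) * ((n+α+k).choose k : ℝ) *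
            ((Nat.factorial (α+n)) * (2*(n:ℝ)+α+1) /
              ((Nat.factorial n) * (Nat.factorial (q-n)) * (Nat.factorial (q+n+α+1))))) * c^k := by
    intro n hn
    have hnq : n ≤ q := Nat.lt_succ_iff.mp (mem_range.mp hn)
    rw [F1, Finset.sum_mul]
    have e1 : ∀ k ∈ range (n+1),
        ((-1:ℝ)^(n-k) * (n.choose k : ℝ) * ((n+α+k).choose k : ℝ) * c^k) *
          ((Nat.factorial (α+n)) * (2*(n:ℝ)+α+1) /
            ((Nat.factorial n) * (Nat.factorial (q-n)) * (Nat.factorial (q+n+α+1))))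
        = ((-1:ℝ)^(n-k) * (n.choose k : ℝ) * ((n+α+k).choose k : ℝ) *
            ((Nat.factorial (α+n)) * (2*(n:ℝ)+α+1) /
              ((Nat.factorial n) * (Nat.factorial (q-n)) * (Nat.factorial (q+n+α+1))))) * c^k := by
      intro k _
      ring
    rw [Finset.sum_congr rfl e1]
    refine Finset.sum_subset (Finset.range_subset_range.mpr (by omega)) ?_
    intro k _ hk
    have hnk : n < k := by
      rcases Nat.lt_or_ge n k with h | h
      · exact h
      · exact absurd (Finset.mem_range.mpr (by omega)) hk
    rw [Nat.choose_eq_zero_of_lt hnk]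
    simp
  rw [Finset.sum_congr rfl step1, Finset.sum_comm]
  have step2 : ∀ k ∈ range (q+1),
      ∑ n ∈ range (q+1),
        ((-1:ℝ)^(n-k) * (n.choose k : ℝ) * ((n+α+k).choose k : ℝ) *
          ((Nat.factorial (α+n)) * (2*(n:ℝ)+α+1) /
            ((Nat.factorial n) * (Nat.factorial (q-n)) * (Nat.factorial (q+n+α+1))))) * c^k
      = (if k = q then 1/(Nat.factorial q : ℝ)^2 else 0) * c^k := by
    intro k hk
    rw [← Finset.sum_mul, F2 α q k (Nat.lt_succ_iff.mp (mem_range.mp hk))]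
  rw [Finset.sum_congr rfl step2, Finset.sum_eq_single_of_mem q (self_mem_range_succ q)
    (fun k _ hkq => by rw [if_neg hkq, zero_mul])]
  rw [if_pos rfl]
  ring

private lemma poch_nat (b m : ℕ) : poch ((b:ℝ)+1) m
    = (Nat.factorial (b+m) : ℝ) / (Nat.factorial b : ℝ) := by
  induction m with
  | zero => simp [poch, div_self (facR_pos b).ne']
  | succ m ih =>
    rw [poch, Finset.prod_range_succ, ← poch, ih, show b + (m+1) = (b+m)+1 from rfl,
        Nat.factorial_succ (b+m)]
    push_cast
    field_simp
    ring

private lemma tsum_prod_antidiag {f : ℕ × ℕ → ℝ} (hf : Summable f) :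
    ∑' p : ℕ × ℕ, f p = ∑' q : ℕ, ∑ kl ∈ Finset.HasAntidiagonal.antidiagonal q, f kl := by
  have : ∀ q : ℕ, ∑ kl ∈ Finset.HasAntidiagonal.antidiagonal q, f kl = ∑' kl : (Finset.HasAntidiagonal.antidiagonal q : Finset (ℕ×ℕ)), f kl := by
    intro q
    rw [← Finset.sum_finset_coe, tsum_fintype]
    rfl
  simp only [this]
  rw [← Finset.HasAntidiagonal.sigmaAntidiagonalEquivProd.tsum_eq f]
  exact Summable.tsum_sigma' (fun n => (hasSum_fintype _).summable)
      (Finset.HasAntidiagonal.sigmaAntidiagonalEquivProd.summable_iff.mpr hf)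

private lemma fac_add_le (p k : ℕ) :
    (Nat.factorial p : ℝ) * (Nat.factorial k : ℝ) ≤ (Nat.factorial (p+k) : ℝ) := by
  exact_mod_cast Nat.le_of_dvd (p+k).factorial_pos
    (Nat.factorial_mul_factorial_dvd_factorial_add p k)

private lemma choose_le_two_pow (n k : ℕ) : n.choose k ≤ 2^n := by
  rcases Nat.lt_or_ge n k with h | h
  · rw [Nat.choose_eq_zero_of_lt h]; positivity
  · calc n.choose k ≤ ∑ m ∈ range (n+1), n.choose m :=
        Finset.single_le_sum (fun _ _ => Nat.zero_le _) (mem_range.mpr (by omega))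
    _ = 2^n := Nat.sum_range_choose n

private lemma jac_bound (α n : ℕ) (c : ℝ) (h0 : 0 ≤ c) (h1 : c ≤ 1) :
    |jacobiP α 0 n (2*c-1)| ≤ 2^(n+α) * 2^n := by
  unfold jacobiP
  simp only [Nat.add_zero, show (2*c-1-1)/2 = c-1 from by ring,
    show (2*c-1+1)/2 = c from by ring]
  calc |∑ m ∈ range (n+1), ((n+α).choose (n-m) : ℝ) * ((n).choose m : ℝ) * (c-1)^m * c^(n-m)|
      ≤ ∑ m ∈ range (n+1), |((n+α).choose (n-m) : ℝ) * ((n).choose m : ℝ) * (c-1)^m * c^(n-m)| :=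
        Finset.abs_sum_le_sum_abs _ _
    _ ≤ ∑ m ∈ range (n+1), (2:ℝ)^(n+α) * ((n).choose m : ℝ) := by
        refine Finset.sum_le_sum (fun m _ => ?_)
        rw [abs_mul, abs_mul, abs_mul, abs_pow, abs_pow, Nat.abs_cast, Nat.abs_cast]
        have hb1 : |c - 1| ≤ 1 := abs_le.mpr ⟨by linarith, by linarith⟩
        have hb2 : |c| ≤ 1 := abs_le.mpr ⟨by linarith, by linarith⟩
        have e1 : |c-1|^m ≤ 1 := pow_le_one₀ (abs_nonneg _) hb1
        have e2 : |c|^(n-m) ≤ 1 := pow_le_one₀ (abs_nonneg _) hb2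
        have e3 : (0:ℝ) ≤ ((n+α).choose (n-m) : ℝ) * ((n).choose m : ℝ) := by positivity
        calc ((n+α).choose (n-m) : ℝ) * ((n).choose m : ℝ) * |c-1|^m * |c|^(n-m)
            = (((n+α).choose (n-m) : ℝ) * ((n).choose m : ℝ)) * (|c-1|^m * |c|^(n-m)) := by ring
          _ ≤ (((n+α).choose (n-m) : ℝ) * ((n).choose m : ℝ)) * 1 :=
              mul_le_mul_of_nonneg_left
                (mul_le_one₀ e1 (pow_nonneg (abs_nonneg _) _) e2) e3
          _ = ((n+α).choose (n-m) : ℝ) * ((n).choose m : ℝ) := mul_one _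
          _ ≤ (2:ℝ)^(n+α) * ((n).choose m : ℝ) := by
              gcongr
              exact_mod_cast choose_le_two_pow (n+α) (n-m)
    _ = 2^(n+α) * 2^n := by
        rw [← Finset.mul_sum]
        congr 1
        rw [← Nat.cast_sum, Nat.sum_range_choose]
        push_cast
        ring

set_option maxHeartbeats 1000000 in
/-- With `a_n = P_n^{(N-2,0)}(2c-1)/(N+n-1)_n`, the Neumann series
`∑ (a_n/n!) (N+2n-1)! (-1)^n J_{2n+N-1}(x)` converges absolutely to
`(x/2)^{N-1} J_0(√c x)`. -/
theorem stmt_2 (N : ℕ) (hN : 2 ≤ N) (c : ℝ) (hc : c ∈ Set.Icc (0 : ℝ) 1) (x : ℝ) :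
    Summable (fun n : ℕ =>
      |(jacobiP (N - 2) 0 n (2 * c - 1) / poch ((N : ℝ) + n - 1) n) / (Nat.factorial n : ℝ) *
        (Nat.factorial (N + 2 * n - 1) : ℝ) * (-1 : ℝ) ^ n * besselJ (2 * n + N - 1) x|) ∧
    ∑' n : ℕ,
        (jacobiP (N - 2) 0 n (2 * c - 1) / poch ((N : ℝ) + n - 1) n) / (Nat.factorial n : ℝ) *
          (Nat.factorial (N + 2 * n - 1) : ℝ) * (-1 : ℝ) ^ n * besselJ (2 * n + N - 1) x =
      (x / 2) ^ (N - 1) *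
        ∑' p : ℕ, (-1 : ℝ) ^ p * c ^ p * (x / 2) ^ (2 * p) / (Nat.factorial p : ℝ) ^ 2 := by
  obtain ⟨α, rfl⟩ : ∃ α, N = α + 2 := ⟨N - 2, by omega⟩
  obtain ⟨hc0, hc1⟩ := hc
  set y : ℝ := |x| / 2 with hy
  have hy0 : 0 ≤ y := by positivity
  -- the coefficient b n
  set b : ℕ → ℝ := fun n =>
    jacobiP α 0 n (2*c-1) * (Nat.factorial (α+n)) * (2*(n:ℝ)+α+1) / (Nat.factorial n) with hb
  -- the double family
  set f : ℕ × ℕ → ℝ := fun np =>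
    b np.1 * (-1:ℝ)^np.1 * ((-1:ℝ)^np.2 /
      ((Nat.factorial np.2 : ℝ) * (Nat.factorial (np.2 + (2*np.1+α+1)) : ℝ)) *
      (x/2)^(2*np.2 + (2*np.1+α+1))) with hf
  -- index normalization
  simp only [show α+2-2 = α from by omega,
    show ∀ n:ℕ, α+2+2*n-1 = (α+2*n)+1 from fun n => by omega,
    show ∀ n:ℕ, 2*n+(α+2)-1 = 2*n+α+1 from fun n => by omega,
    show α+2-1 = α+1 from by omega]
  -- poch evaluation
  have hpoch : ∀ n : ℕ, poch (((α+2:ℕ):ℝ) + (n:ℝ) - 1) n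
      = (Nat.factorial (α+2*n) : ℝ) / (Nat.factorial (α+n) : ℝ) := by
    intro n
    have h0 : (((α+2:ℕ):ℝ) + (n:ℝ) - 1) = (((α+n:ℕ)):ℝ) + 1 := by push_cast; ring
    rw [h0, poch_nat, show α+n+n = α+2*n from by omega]
  -- term identification
  have hterm : ∀ n : ℕ,
      (jacobiP α 0 n (2 * c - 1) / poch (((α+2:ℕ):ℝ) + (n:ℝ) - 1) n) / (Nat.factorial n : ℝ) *
        (Nat.factorial ((α + 2 * n)+1) : ℝ) * (-1 : ℝ) ^ n * besselJ (2 * n + α + 1) x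
      = b n * (-1:ℝ)^n * besselJ (2*n+α+1) x := by
    intro n
    rw [hpoch n, Nat.factorial_succ (α+2*n), hb]
    have h1 := facR_ne n
    have h2 := facR_ne (α+n)
    have h3 := facR_ne (α+2*n)
    field_simp
    push_cast
    ring
  have hJ : ∀ n : ℕ, b n * (-1:ℝ)^n * besselJ (2*n+α+1) x = ∑' p : ℕ, f (n, p) := by
    intro n
    rw [besselJ, ← tsum_mul_left]
  -- summability of |f|
  have habsf : ∀ np : ℕ × ℕ, |f np| =
      |b np.1| / ((Nat.factorial np.2 : ℝ) * (Nat.factorial (np.2 + (2*np.1+α+1)) : ℝ)) *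
        y^(2*np.2 + (2*np.1+α+1)) := by
    intro np
    rw [hf]
    simp only [abs_mul, abs_div, abs_pow, abs_neg, abs_one, one_pow, abs_two, Nat.abs_cast]
    rw [← hy]
    ring
  -- bounding functions
  set g : ℕ → ℝ := fun n => |b n| / (Nat.factorial (2*n+α+1) : ℝ) * y^(2*n+α+1) with hg
  set h : ℕ → ℝ := fun p => (y^2)^p / (Nat.factorial p : ℝ) with hh
  have hfg : ∀ np : ℕ × ℕ, |f np| ≤ g np.1 * h np.2 := by
    rintro ⟨n, p⟩
    rw [habsf]
    simp only [hg, hh]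
    have e1 : y^(2*p + (2*n+α+1)) = (y^2)^p * y^(2*n+α+1) := by
      rw [pow_add, pow_mul]
    have hQ : (Nat.factorial p : ℝ) * (Nat.factorial (2*n+α+1)) ≤ (Nat.factorial (p+(2*n+α+1))) :=
      fac_add_le p (2*n+α+1)
    have hP1 : (1:ℝ) ≤ (Nat.factorial p : ℝ) := by exact_mod_cast (Nat.factorial_pos p)
    have hT : (0:ℝ) ≤ |b n| * ((y^2)^p * y^(2*n+α+1)) :=
      mul_nonneg (abs_nonneg _) (mul_nonneg (pow_nonneg (sq_nonneg y) p) (pow_nonneg hy0 _))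
    calc |b n| / ((Nat.factorial p : ℝ) * (Nat.factorial (p+(2*n+α+1)))) * y^(2*p+(2*n+α+1))
        = (|b n| * ((y^2)^p * y^(2*n+α+1))) / ((Nat.factorial p : ℝ) * (Nat.factorial (p+(2*n+α+1)))) := by
          rw [e1]; ring
      _ ≤ (|b n| * ((y^2)^p * y^(2*n+α+1))) / ((Nat.factorial (2*n+α+1) : ℝ) * (Nat.factorial p)) := by
          apply div_le_div_of_nonneg_left hT (by positivity)
          nlinarith [facR_pos p, facR_pos (2*n+α+1), facR_pos (p+(2*n+α+1))]
      _ = |b n| / (Nat.factorial (2*n+α+1) : ℝ) * y^(2*n+α+1) * ((y^2)^p / (Nat.factorial p : ℝ)) := by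
          ring
  have habs_b : ∀ n : ℕ, |b n| = |jacobiP α 0 n (2*c-1)| *
      ((Nat.factorial (α+n) : ℝ) * (2*(n:ℝ)+α+1) / (Nat.factorial n : ℝ)) := by
    intro n
    rw [hb]
    simp only []
    rw [abs_div, abs_mul, abs_mul, abs_of_pos (facR_pos (α+n)), abs_of_pos (facR_pos n),
        abs_of_pos (show (0:ℝ) < 2*(n:ℝ)+α+1 by positivity)]
    ring
  have hgnn : ∀ n, 0 ≤ g n := by
    intro n
    exact mul_nonneg (div_nonneg (abs_nonneg _) (facR_pos _).le) (pow_nonneg hy0 _)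
  have hhnn : ∀ p, 0 ≤ h p := by
    intro p
    exact div_nonneg (pow_nonneg (sq_nonneg y) p) (facR_pos _).le
  have hgsum : Summable g := by
    refine Summable.of_nonneg_of_le hgnn (fun n => ?_)
      ((Real.summable_pow_div_factorial (4*y^2)).mul_left ((2:ℝ)^α * y^(α+1)))
    have hfacsplit : (Nat.factorial (2*n+α+1) : ℝ) = (2*(n:ℝ)+α+1) * (Nat.factorial (2*n+α)) := by
      rw [show 2*n+α+1 = (2*n+α)+1 from rfl, Nat.factorial_succ]
      push_cast
      ring
    have hmono : (Nat.factorial (α+n) : ℝ) ≤ (Nat.factorial (2*n+α)) := by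
      exact_mod_cast Nat.factorial_le (by omega)
    have hRatio : (Nat.factorial (α+n) : ℝ) * (2*(n:ℝ)+α+1) / (Nat.factorial n : ℝ)
        / (Nat.factorial (2*n+α+1) : ℝ) ≤ 1/(Nat.factorial n : ℝ) := by
      rw [div_div, hfacsplit, div_le_div_iff₀ (by positivity) (facR_pos n)]
      have h1 := facR_pos n
      have h2 : (0:ℝ) < 2*(n:ℝ)+α+1 := by positivity
      nlinarith [mul_le_mul_of_nonneg_left hmono (mul_nonneg h1.le h2.le)]
    have hjac := jac_bound α n c hc0 hc1
    calc g n = |b n| / (Nat.factorial (2*n+α+1) : ℝ) * y^(2*n+α+1) := rfl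
      _ = |jacobiP α 0 n (2*c-1)| *
            ((Nat.factorial (α+n) : ℝ) * (2*(n:ℝ)+α+1) / (Nat.factorial n : ℝ)
              / (Nat.factorial (2*n+α+1) : ℝ)) * y^(2*n+α+1) := by
          rw [habs_b n]; ring
      _ ≤ ((2:ℝ)^(n+α)*2^n) * (1/(Nat.factorial n : ℝ)) * y^(2*n+α+1) := by
          have hy2 : (0:ℝ) ≤ y^(2*n+α+1) := pow_nonneg hy0 _
          have hr0 : (0:ℝ) ≤ (Nat.factorial (α+n) : ℝ) * (2*(n:ℝ)+α+1) / (Nat.factorial n : ℝ)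
              / (Nat.factorial (2*n+α+1) : ℝ) := by positivity
          have := mul_le_mul hjac hRatio hr0 (by positivity)
          exact mul_le_mul_of_nonneg_right this hy2
      _ = (2:ℝ)^α * y^(α+1) * ((4*y^2)^n / (Nat.factorial n : ℝ)) := by
          rw [pow_add, show 2*n+α+1 = (α+1)+2*n from by omega, pow_add (y) (α+1), pow_mul,
              mul_pow, show ((4:ℝ) = 2*2) from by norm_num, mul_pow]
          ring
  have hhsum : Summable h := Real.summable_pow_div_factorial (y^2)
  have hsumabs : Summable (fun np : ℕ × ℕ => |f np|) :=
    Summable.of_nonneg_of_le (fun np => abs_nonneg _) hfg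
      (hgsum.mul_of_nonneg hhsum hgnn hhnn)
  have hsumf : Summable f := hsumabs.of_abs
  constructor
  · -- summability
    simp only [hterm]
    have hmarg : Summable (fun n => ∑' p, |f (n,p)|) :=
      ((summable_prod_of_nonneg (fun _ => abs_nonneg _)).mp hsumabs).2
    refine Summable.of_nonneg_of_le (fun n => abs_nonneg _) (fun n => ?_) hmarg
    rw [hJ n]
    have hsn : Summable (fun p => ‖f (n,p)‖) := by
      simpa [Real.norm_eq_abs] using hsumabs.prod_factor n
    calc |∑' p, f (n,p)| = ‖∑' p, f (n,p)‖ := (Real.norm_eq_abs _).symm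
      _ ≤ ∑' p, ‖f (n,p)‖ := norm_tsum_le_tsum_norm hsn
      _ = ∑' p, |f (n,p)| := by simp [Real.norm_eq_abs]
  · -- the evaluation
    have hinner : ∀ q : ℕ, ∑ n ∈ range (q+1), f (n, q-n)
        = (x/2)^(α+1) * ((-1:ℝ)^q * c^q * (x/2)^(2*q) / (Nat.factorial q : ℝ)^2) := by
      intro q
      have e : ∀ n ∈ range (q+1), f (n, q-n)
          = ((-1:ℝ)^q * ((x/2)^(α+1) * (x/2)^(2*q))) *
            (jacobiP α 0 n (2*c-1) *
              ((Nat.factorial (α+n)) * (2*(n:ℝ)+α+1) /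
                ((Nat.factorial n) * (Nat.factorial (q-n)) * (Nat.factorial (q+n+α+1))))) := by
        intro n hn
        have hnq : n ≤ q := Nat.lt_succ_iff.mp (mem_range.mp hn)
        have hsgn : (-1:ℝ)^n * (-1)^(q-n) = (-1)^q := by
          rw [← pow_add, show n+(q-n) = q from by omega]
        have hxsplit : (x/2)^(2*(q-n) + (2*n+α+1)) = (x/2)^(α+1) * (x/2)^(2*q) := by
          rw [show 2*(q-n)+(2*n+α+1) = (α+1)+2*q from by omega, pow_add]
        calc f (n, q-n)
            = ((-1:ℝ)^n * (-1)^(q-n)) * (b n *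
                ((x/2)^(2*(q-n) + (2*n+α+1)) /
                  ((Nat.factorial (q-n) : ℝ) * (Nat.factorial ((q-n) + (2*n+α+1)) : ℝ)))) := by
              rw [hf]; ring
          _ = _ := by
              rw [hsgn, hxsplit, hb, show (q-n) + (2*n+α+1) = q+n+α+1 from by omega]
              have h1 := facR_ne n
              have h2 := facR_ne (q-n)
              have h3 := facR_ne (q+n+α+1)
              field_simp
      rw [Finset.sum_congr rfl e, ← Finset.mul_sum, KEY α q c]
      ring
    calc ∑' n, (jacobiP α 0 n (2 * c - 1) / poch (((α+2:ℕ):ℝ) + (n:ℝ) - 1) n / (Nat.factorial n : ℝ) *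
            (Nat.factorial ((α + 2 * n)+1) : ℝ) * (-1 : ℝ) ^ n * besselJ (2 * n + α + 1) x)
        = ∑' n, ∑' p, f (n,p) := tsum_congr (fun n => (hterm n).trans (hJ n))
      _ = ∑' np : ℕ × ℕ, f np := (Summable.tsum_prod' hsumf (fun n => hsumf.prod_factor n)).symm
      _ = ∑' q, ∑ kl ∈ Finset.HasAntidiagonal.antidiagonal q, f kl := tsum_prod_antidiag hsumf
      _ = ∑' q, ∑ n ∈ range (q+1), f (n, q-n) :=
          tsum_congr (fun q => Finset.Nat.sum_antidiagonal_eq_sum_range_succ_mk _ q)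
      _ = ∑' q, (x/2)^(α+1) * ((-1:ℝ)^q * c^q * (x/2)^(2*q) / (Nat.factorial q : ℝ)^2) :=
          tsum_congr hinner
      _ = (x/2)^(α+1) * ∑' q, ((-1:ℝ)^q * c^q * (x/2)^(2*q) / (Nat.factorial q : ℝ)^2) :=
          tsum_mul_left
end

section
/- Let N ≥ 2 and n ≥ 0 be integers and λ a real number. Then λ^n · ∑_{m=0}^∞ (n+1)_m / ((N+2n)_m · m!) · λ^m = (-1)^n · (N+n-1)_{n+1} · ∫_0^1 e^{λu} P_n^{(0,N-2)}(1-2u) (1-u)^{N-2} du. (The series on the left is the confluent hypergeometric function ₁F₁(n+1; N+2n; λ) multiplied by λ^n.) -/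
lemma comb (n : ℕ) : ∀ c k : ℕ, ∑ m ∈ Finset.range (n+1),
    (-1:ℝ)^m * (n.choose m) * ((c+m).choose k) =
    (-1:ℝ)^n * (if n ≤ k then (((c.choose (k-n)) : ℕ) : ℝ) else 0) := by
  induction n with
  | zero => intro c k; simp
  | succ n ih =>
    intro c k
    have step : ∑ m ∈ Finset.range (n+2), (-1:ℝ)^m * ((n+1).choose m) * ((c+m).choose k)
        = (∑ m ∈ Finset.range (n+1), (-1:ℝ)^m * (n.choose m) * ((c+m).choose k))
          - ∑ m ∈ Finset.range (n+1), (-1:ℝ)^m * (n.choose m) * (((c+1)+m).choose k) := by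
      rw [Finset.sum_range_succ' _ (n+1)]
      have expand : ∀ m ∈ Finset.range (n+1),
          (-1:ℝ)^(m+1) * ((n+1).choose (m+1)) * ((c+(m+1)).choose k)
          = ((-1:ℝ)^(m+1) * (n.choose (m+1)) * ((c+(m+1)).choose k))
            + (-((-1:ℝ)^m * (n.choose m) * (((c+1)+m).choose k))) := by
        intro m _
        have : ((c+1)+m) = c + (m+1) := by ring
        rw [this, Nat.choose_succ_succ]
        push_cast
        ring
      rw [Finset.sum_congr rfl expand, Finset.sum_add_distrib]
      have shift : (∑ m ∈ Finset.range (n+1), (-1:ℝ)^(m+1) * (n.choose (m+1)) * ((c+(m+1)).choose k))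
          + (-1:ℝ)^0 * ((n+1).choose 0) * ((c+0).choose k)
          = ∑ m ∈ Finset.range (n+1), (-1:ℝ)^m * (n.choose m) * ((c+m).choose k) := by
        have e0 : ((-1:ℝ)^0 * ((n+1).choose 0) * ((c+0).choose k))
            = (-1:ℝ)^0 * ((n).choose 0) * ((c+0).choose k) := by simp
        rw [e0, ← Finset.sum_range_succ' (fun m => (-1:ℝ)^m * (n.choose m) * ((c+m).choose k)) (n+1), Finset.sum_range_succ]
        simp [Nat.choose_succ_self]
      rw [Finset.sum_neg_distrib]
      linarith [shift]
    rw [step, ih c k, ih (c+1) k]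
    rcases lt_trichotomy k n with h | h | h
    · simp [Nat.not_le.mpr h, Nat.not_le.mpr (by omega : k < n+1)]
    · subst h
      simp [Nat.not_le.mpr (by omega : k < k+1), Nat.sub_self]
    · have h1 : n ≤ k := by omega
      have h2 : n + 1 ≤ k := by omega
      have h3 : k - n = (k - (n+1)) + 1 := by omega
      simp only [if_pos h1, if_pos h2, h3, Nat.choose_succ_succ]
      push_cast
      ring

open intervalIntegral in
lemma beta_nat : ∀ b a : ℕ, ∫ u in (0:ℝ)..1, u^a * (1-u)^b
    = (Nat.factorial a * Nat.factorial b : ℝ) / (Nat.factorial (a+b+1)) := by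
  intro b
  induction b with
  | zero =>
    intro a
    simp only [pow_zero, mul_one, integral_pow, Nat.factorial_succ, Nat.add_zero, Nat.factorial]
    push_cast
    rw [one_pow, zero_pow (by omega : a+1 ≠ 0)]
    field_simp
    norm_num
  | succ b ih =>
    intro a
    have cont1 : Continuous fun u : ℝ => (a+1:ℝ) * u^a * (1-u)^(b+1) := by continuity
    have cont2 : Continuous fun u : ℝ => (b+1:ℝ) * u^(a+1) * (1-u)^b := by continuity
    have deriv : ∀ u ∈ Set.uIcc (0:ℝ) 1, HasDerivAt (fun u : ℝ => u^(a+1) * (1-u)^(b+1))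
        ((a+1:ℝ) * u^a * (1-u)^(b+1) - (b+1:ℝ) * u^(a+1) * (1-u)^b) u := by
      intro u _
      have h1 : HasDerivAt (fun u : ℝ => u^(a+1)) ((a+1:ℝ) * u^a) u := by
        simpa using hasDerivAt_pow (a+1) u
      have h2 : HasDerivAt (fun u : ℝ => (1-u)^(b+1)) (-((b+1:ℝ) * (1-u)^b)) u := by
        have hb : HasDerivAt (fun u : ℝ => 1 - u) (-1) u := by
          simpa using (hasDerivAt_id' u).const_sub (1:ℝ)
        have := (hasDerivAt_pow (b+1) (1-u)).comp u hb
        simpa [mul_comm, mul_assoc, Function.comp_def] using this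
      have := h1.fun_mul h2
      exact this.congr_deriv (by ring)
    have key : ∫ u in (0:ℝ)..1, ((a+1:ℝ) * u^a * (1-u)^(b+1) - (b+1:ℝ) * u^(a+1) * (1-u)^b)
        = 0 := by
      rw [integral_eq_sub_of_hasDerivAt deriv ((cont1.sub cont2).intervalIntegrable 0 1)]
      norm_num
    rw [integral_sub (cont1.intervalIntegrable 0 1) (cont2.intervalIntegrable 0 1)] at key
    have e1 : ∫ u in (0:ℝ)..1, (a+1:ℝ) * u^a * (1-u)^(b+1)
        = (a+1:ℝ) * ∫ u in (0:ℝ)..1, u^a * (1-u)^(b+1) := by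
      rw [← integral_const_mul]; congr 1; ext u; ring
    have e2 : ∫ u in (0:ℝ)..1, (b+1:ℝ) * u^(a+1) * (1-u)^b
        = (b+1:ℝ) * ∫ u in (0:ℝ)..1, u^(a+1) * (1-u)^b := by
      rw [← integral_const_mul]; congr 1; ext u; ring
    rw [e1, e2, ih (a+1)] at key
    have ha : (a:ℝ) + 1 ≠ 0 := by positivity
    have : (∫ u in (0:ℝ)..1, u^a * (1-u)^(b+1))
        = (b+1:ℝ) * ((Nat.factorial (a+1) * Nat.factorial b : ℝ) / (Nat.factorial (a+1+b+1))) / (a+1:ℝ) := by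
      field_simp at key ⊢
      linarith
    rw [this]
    have harr : a + 1 + b + 1 = a + (b+1) + 1 := by omega
    rw [harr]
    have hfpos : (0:ℝ) < (Nat.factorial (a+(b+1)+1) : ℝ) := by positivity
    rw [Nat.factorial_succ (a), Nat.factorial_succ b]
    push_cast
    field_simp

open MeasureTheory intervalIntegral

lemma beta_set (a b : ℕ) : ∫ u in Set.Ioc (0:ℝ) 1, u^a * (1-u)^b
    = (Nat.factorial a * Nat.factorial b : ℝ) / (Nat.factorial (a+b+1)) := by
  rw [← intervalIntegral.integral_of_le (by norm_num : (0:ℝ) ≤ 1)]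
  exact beta_nat b a

lemma fact_le (a b : ℕ) : (Nat.factorial a * Nat.factorial b : ℝ) / (Nat.factorial (a+b+1)) ≤ 1 := by
  rw [div_le_one (by positivity)]
  have h : Nat.factorial a * Nat.factorial b ≤ Nat.factorial (a+b+1) :=
    le_trans (Nat.le_of_dvd (Nat.factorial_pos _) (Nat.factorial_mul_factorial_dvd_factorial_add a b))
      (Nat.factorial_le (by omega))
  exact_mod_cast h

lemma exp_moment (l : ℝ) (a b : ℕ) :
    ∫ u in (0:ℝ)..1, Real.exp (l*u) * (u^a * (1-u)^b)
    = ∑' k : ℕ, l^k / (Nat.factorial k) *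
        ((Nat.factorial (a+k) * Nat.factorial b : ℝ) / (Nat.factorial (a+k+b+1))) := by
  rw [intervalIntegral.integral_of_le (by norm_num : (0:ℝ) ≤ 1)]
  have expand : ∀ u : ℝ, Real.exp (l*u) * (u^a * (1-u)^b)
      = ∑' k : ℕ, (l^k / (Nat.factorial k)) * (u^(a+k) * (1-u)^b) := by
    intro u
    rw [Real.exp_eq_exp_ℝ, NormedSpace.exp_eq_tsum_div, ← tsum_mul_right]
    congr 1; ext k
    rw [mul_pow, pow_add]
    ring
  simp_rw [expand]
  rw [← MeasureTheory.integral_tsum_of_summable_integral_norm]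
  · congr 1; ext k
    rw [MeasureTheory.integral_const_mul, beta_set]
  · intro k
    apply Continuous.integrableOn_Ioc
    continuity
  · have hbound : ∀ k : ℕ, ∫ u in Set.Ioc (0:ℝ) 1,
        ‖(l^k / (Nat.factorial k)) * (u^(a+k) * (1-u)^b)‖ ≤ |l|^k / (Nat.factorial k) := by
      intro k
      have heq : ∀ u ∈ Set.Ioc (0:ℝ) 1,
          ‖(l^k / (Nat.factorial k)) * (u^(a+k) * (1-u)^b)‖
          = (|l|^k / (Nat.factorial k)) * (u^(a+k) * (1-u)^b) := by
        intro u hu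
        have h1 : 0 < u := hu.1
        have h3 : (0:ℝ) ≤ 1 - u := by linarith [hu.2]
        rw [Real.norm_eq_abs, abs_mul, abs_mul, abs_div, abs_pow, abs_pow, abs_pow,
          Nat.abs_cast, abs_of_pos h1, abs_of_nonneg h3]
      rw [MeasureTheory.setIntegral_congr_fun measurableSet_Ioc heq,
        MeasureTheory.integral_const_mul, beta_set]
      calc |l|^k / (Nat.factorial k) * ((Nat.factorial (a+k) * Nat.factorial b : ℝ) / (Nat.factorial (a+k+b+1)))
          ≤ |l|^k / (Nat.factorial k) * 1 := by
            apply mul_le_mul_of_nonneg_left (fact_le _ _) (by positivity)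
        _ = |l|^k / (Nat.factorial k) := by ring
    apply Summable.of_nonneg_of_le (fun k => integral_nonneg (fun u => norm_nonneg _)) hbound
    exact Real.summable_pow_div_factorial |l|


lemma poch_nat_s7 (a : ℕ) : ∀ m : ℕ, poch ((a:ℝ)+1) m = ((a+m).factorial : ℝ) / (a.factorial) := by
  intro m
  induction m with
  | zero => simp [poch, div_self (by positivity : ((a.factorial : ℝ)) ≠ 0)]
  | succ m ih =>
    rw [poch, Finset.prod_range_succ, ← poch, ih]
    have : a + (m+1) = (a+m) + 1 := by omega
    rw [this, Nat.factorial_succ]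
    push_cast
    field_simp
    ring

-- shift lemma
lemma tsum_shift (g : ℕ → ℝ) (n : ℕ) (h0 : ∀ k < n, g k = 0) :
    ∑' k, g k = ∑' m, g (n+m) := by
  symm
  apply Function.Injective.tsum_eq (g := fun m => n + m)
  · intro x y h; simpa using h
  · intro k hk
    rcases lt_or_ge k n with h | h
    · exact absurd (h0 k h) hk
    · exact ⟨k - n, by simp; omega⟩


/-- `λ^n ₁F₁(n+1; N+2n; λ) = (-1)^n (N+n-1)_{n+1} ∫_0^1 e^{λu} P_n^{(0,N-2)}(1-2u) (1-u)^{N-2} du`. -/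
theorem stmt_7 (N : ℕ) (hN : 2 ≤ N) (n : ℕ) (l : ℝ) :
    l ^ n * ∑' m : ℕ,
        poch ((n : ℝ) + 1) m / (poch ((N : ℝ) + 2 * n) m * (Nat.factorial m : ℝ)) * l ^ m =
      (-1 : ℝ) ^ n * poch ((N : ℝ) + n - 1) (n + 1) *
        ∫ u in (0 : ℝ)..1, Real.exp (l * u) * jacobiP 0 (N - 2) n (1 - 2 * u) *
          (1 - u) ^ (N - 2) := by
  obtain ⟨c, rfl⟩ : ∃ c, N = c + 2 := ⟨N - 2, by omega⟩
  clear hN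
  have hc2 : c + 2 - 2 = c := by omega
  rw [hc2]
  -- notation
  set F : ℕ → ℝ := fun k => ((c+2*n+1).factorial : ℝ) * l^k *
      (if n ≤ k then ((k.choose (k-n)) : ℝ) else 0) / ((n+c+k+1).factorial) with hF
  -- Step A: integrand expansion
  have stepA : ∀ u : ℝ, Real.exp (l*u) * jacobiP 0 c n (1 - 2*u) * (1-u)^c
      = ∑ m ∈ Finset.range (n+1), ((-1:ℝ)^m * (n.choose (n-m)) * ((n+c).choose m)) *
          (Real.exp (l*u) * (u^m * (1-u)^(n-m+c))) := by
    intro u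
    rw [jacobiP, Finset.mul_sum, Finset.sum_mul]
    apply Finset.sum_congr rfl
    intro m hm
    have e1 : ((1 - 2*u) - 1)/2 = -u := by ring
    have e2 : ((1 - 2*u) + 1)/2 = 1 - u := by ring
    rw [e1, e2, Nat.add_zero, pow_add]
    rw [neg_pow]
    ring
  simp_rw [stepA]
  -- Step B: integrate the finite sum
  have hcontm : ∀ m : ℕ, Continuous fun u : ℝ =>
      ((-1:ℝ)^m * (n.choose (n-m)) * ((n+c).choose m)) * (Real.exp (l*u) * (u^m * (1-u)^(n-m+c))) := by
    intro m; continuity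
  rw [intervalIntegral.integral_finset_sum (fun m _ => ((hcontm m).intervalIntegrable 0 1))]
  have stepB : ∀ m ∈ Finset.range (n+1),
      (∫ u in (0:ℝ)..1, ((-1:ℝ)^m * (n.choose (n-m)) * ((n+c).choose m)) *
          (Real.exp (l*u) * (u^m * (1-u)^(n-m+c))))
      = ∑' k : ℕ, ((-1:ℝ)^m * (n.choose (n-m)) * ((n+c).choose m)) *
          (l^k / (Nat.factorial k) *
            ((Nat.factorial (m+k) * Nat.factorial (n-m+c) : ℝ) / (Nat.factorial (n+c+k+1)))) := by
    intro m hm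
    have hmn : m ≤ n := by simp at hm; omega
    rw [intervalIntegral.integral_const_mul, exp_moment, ← tsum_mul_left]
    congr 1; ext k
    have : m + k + (n-m+c) + 1 = n+c+k+1 := by omega
    rw [this]
  rw [Finset.sum_congr rfl stepB]
  -- summability for swap
  have hsumm : ∀ m ∈ Finset.range (n+1), Summable (fun k : ℕ =>
      ((-1:ℝ)^m * (n.choose (n-m)) * ((n+c).choose m)) *
        (l^k / (Nat.factorial k) *
          ((Nat.factorial (m+k) * Nat.factorial (n-m+c) : ℝ) / (Nat.factorial (n+c+k+1))))) := by
    intro m hm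
    have hmn : m ≤ n := by simp at hm; omega
    apply Summable.mul_left
    apply Summable.of_norm_bounded (Real.summable_pow_div_factorial |l|)
    intro k
    have hB : (0:ℝ) ≤ (Nat.factorial (m+k) * Nat.factorial (n-m+c) : ℝ) / (Nat.factorial (n+c+k+1)) := by
      positivity
    have hB1 : (Nat.factorial (m+k) * Nat.factorial (n-m+c) : ℝ) / (Nat.factorial (n+c+k+1)) ≤ 1 := by
      have := fact_le (m+k) (n-m+c)
      have harr : m + k + (n-m+c) + 1 = n+c+k+1 := by omega
      rwa [harr] at this
    rw [Real.norm_eq_abs, abs_mul, abs_div, abs_pow, Nat.abs_cast, abs_of_nonneg hB]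
    calc |l|^k / (Nat.factorial k) * ((Nat.factorial (m+k) * Nat.factorial (n-m+c) : ℝ) / (Nat.factorial (n+c+k+1)))
        ≤ |l|^k / (Nat.factorial k) * 1 := by
          apply mul_le_mul_of_nonneg_left hB1 (by positivity)
      _ = |l|^k / (Nat.factorial k) := by ring
  rw [← Summable.tsum_finsetSum hsumm]
  -- Step E: evaluate inner finite sum for each k
  have stepE : ∀ k : ℕ, ∑ m ∈ Finset.range (n+1),
      ((-1:ℝ)^m * (n.choose (n-m)) * ((n+c).choose m)) *
        (l^k / (Nat.factorial k) *
          ((Nat.factorial (m+k) * Nat.factorial (n-m+c) : ℝ) / (Nat.factorial (n+c+k+1))))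
      = (l^k * ((n+c).factorial) / ((n+c+k+1).factorial)) *
          ((-1:ℝ)^n * (if n ≤ k then ((k.choose (k-n)) : ℝ) else 0)) := by
    intro k
    have trans : ∀ m ∈ Finset.range (n+1),
        ((-1:ℝ)^m * (n.choose (n-m)) * ((n+c).choose m)) *
          (l^k / (Nat.factorial k) *
            ((Nat.factorial (m+k) * Nat.factorial (n-m+c) : ℝ) / (Nat.factorial (n+c+k+1))))
        = (l^k * ((n+c).factorial) / ((n+c+k+1).factorial)) *
            ((-1:ℝ)^m * (n.choose m) * ((k+m).choose k)) := by
      intro m hm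
      have hmn : m ≤ n := by simp at hm; omega
      rw [Nat.choose_symm hmn]
      have e1 : ((n+c).choose m * Nat.factorial m * Nat.factorial (n+c-m) : ℕ) = Nat.factorial (n+c) :=
        Nat.choose_mul_factorial_mul_factorial (by omega)
      have e2 : ((k+m).choose k * Nat.factorial k * Nat.factorial m : ℕ) = Nat.factorial (k+m) := by
        have := Nat.choose_mul_factorial_mul_factorial (show k ≤ k + m by omega)
        simpa using this
      have e3 : n - m + c = n + c - m := by omega
      have e4 : m + k = k + m := by omega
      rw [e3, e4]
      have e1' : ((n+c).factorial : ℝ) = ((n+c).choose m) * (Nat.factorial m) * (Nat.factorial (n+c-m)) := by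
        exact_mod_cast e1.symm
      have e2' : ((k+m).factorial : ℝ) = ((k+m).choose k) * (Nat.factorial k) * (Nat.factorial m) := by
        exact_mod_cast e2.symm
      rw [e1', e2']
      have hk0 : ((Nat.factorial k : ℝ)) ≠ 0 := by positivity
      have hN0 : ((Nat.factorial (n+c+k+1) : ℝ)) ≠ 0 := by positivity
      field_simp
    rw [Finset.sum_congr rfl trans, ← Finset.mul_sum]
    congr 1
    exact comb n k k
  rw [tsum_congr stepE]
  -- Step F/G: pochhammer values, reduce RHS to ∑' F
  have hP : poch (((c+2:ℕ):ℝ) + n - 1) (n+1) = ((c+2*n+1).factorial : ℝ) / ((c+n).factorial) := by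
    have harg : (((c+2:ℕ):ℝ) + n - 1) = ((c+n : ℕ):ℝ) + 1 := by push_cast; ring
    rw [harg, poch_nat_s7]
    have : c + n + (n+1) = c + 2*n + 1 := by omega
    rw [this]
  rw [hP]
  have hRHS : (-1:ℝ)^n * (((c+2*n+1).factorial : ℝ) / ((c+n).factorial)) *
      ∑' k : ℕ, (l^k * ((n+c).factorial) / ((n+c+k+1).factorial)) *
          ((-1:ℝ)^n * (if n ≤ k then ((k.choose (k-n)) : ℝ) else 0))
      = ∑' k, F k := by
    rw [← tsum_mul_left]
    apply tsum_congr
    intro k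
    simp only [hF]
    have hsq : ((-1:ℝ))^n * ((-1:ℝ))^n = 1 := by
      rw [← pow_add, ← two_mul, pow_mul]; norm_num
    have hcn : ((c+n).factorial : ℝ) ≠ 0 := by positivity
    have hnc : (n+c).factorial = (c+n).factorial := by rw [Nat.add_comm]
    rw [hnc]
    by_cases hnk : n ≤ k
    · rw [if_pos hnk]
      field_simp
      linear_combination (l ^ k * (k.choose (k - n) : ℝ)) * hsq
    · rw [if_neg hnk]
      simp
  rw [hRHS]
  -- Step H: LHS = ∑' m, F (n+m)
  have stepH : l ^ n * ∑' m : ℕ,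
      poch ((n : ℝ) + 1) m / (poch (((c+2:ℕ) : ℝ) + 2 * n) m * (Nat.factorial m : ℝ)) * l ^ m
      = ∑' m : ℕ, F (n+m) := by
    rw [← tsum_mul_left]
    apply tsum_congr
    intro m
    have harg2 : (((c+2:ℕ):ℝ) + 2*n) = ((c+2*n+1 : ℕ):ℝ) + 1 := by push_cast; ring
    rw [harg2, poch_nat_s7, poch_nat_s7]
    simp only [hF]
    have hite : n ≤ n + m := by omega
    rw [if_pos hite]
    have h1 : n + m - n = m := by omega
    have h2 : n + c + (n+m) + 1 = c + 2*n + 1 + m := by omega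
    rw [h1, h2]
    have e5 : ((n+m).choose m * Nat.factorial m * Nat.factorial n : ℕ) = Nat.factorial (n+m) := by
      have := Nat.choose_mul_factorial_mul_factorial (show m ≤ n + m by omega)
      simpa using this
    have e5' : ((n+m).factorial : ℝ) = ((n+m).choose m) * (Nat.factorial m) * (Nat.factorial n) := by
      exact_mod_cast e5.symm
    rw [e5']
    have h10 : ((Nat.factorial n : ℝ)) ≠ 0 := by positivity
    have h11 : ((Nat.factorial m : ℝ)) ≠ 0 := by positivity
    have h12 : ((Nat.factorial (c+2*n+1) : ℝ)) ≠ 0 := by positivity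
    have h13 : ((Nat.factorial (c+2*n+1+m) : ℝ)) ≠ 0 := by positivity
    have hcm' : (((n+m).choose m : ℕ) : ℝ) = (((n+m).choose n : ℕ) : ℝ) := by
      norm_cast
      rw [← Nat.choose_symm (show n ≤ n+m by omega)]
      congr 1; omega
    rw [pow_add]
    field_simp
  rw [stepH]
  -- Step I: shift
  apply (tsum_shift F n ?_).symm
  intro k hk
  simp only [hF]
  rw [if_neg (by omega : ¬ n ≤ k)]
  simp
end
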